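/- Let Γ ∈ ℝ^{n×ν} with k = rank Γ and A = [α_{ij}] ∈ ℤ≥0^{n×ν}. Suppose that for every ρ ∈ ℝ^{ν×n} with ρ_{ji} ≥ 0 for α_{ij} > 0 and ρ_{ji} = 0 for α_{ij} = 0, every principal minor of −Γρ is nonnegative (P₀ property). If for some such ρ₀ with ρ₀_{ji} > 0 for all (i,j) with α_{ij} > 0 the sum of all k×k principal minors of −Γρ₀ is positive, then this sum is positive for every such ρ whose supported entries are all strictly positive; in particular, for every admissible kinetics R ∈ K_A and every x in the open positive orthant, the sum of all k×k principal minors of −Γ(∂R/∂x)(x) is positive. -/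
import Mathlib


open Filter Set Topology

/-- Partial derivative ∂R_j/∂x_i at x. -/
noncomputable def pd {n ν : ℕ} (R : (Fin n → ℝ) → Fin ν → ℝ)
    (x : Fin n → ℝ) (j : Fin ν) (i : Fin n) : ℝ :=
  fderiv ℝ (fun y => R y j) x (Pi.single i 1)

/-- Admissible kinetics (A1)-(A4) for a reactant matrix `A`. -/
structure IsAdmissible {n ν : ℕ} (A : Matrix (Fin n) (Fin ν) ℕ)
    (R : (Fin n → ℝ) → Fin ν → ℝ) : Prop where
  smooth : ContDiff ℝ 1 R
  nonneg : ∀ x, (∀ i, 0 ≤ x i) → ∀ j, 0 ≤ R x j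
  vanish : ∀ x, (∀ i, 0 ≤ x i) → ∀ i j, 0 < A i j → x i = 0 → R x j = 0
  deriv_nonneg : ∀ x, (∀ i, 0 ≤ x i) → ∀ i j, 0 < A i j → 0 ≤ pd R x j i
  deriv_zero : ∀ x, (∀ i, 0 ≤ x i) → ∀ i j, A i j = 0 → pd R x j i = 0
  deriv_pos : ∀ x, (∀ i, 0 < x i) → ∀ i j, 0 < A i j → 0 < pd R x j i

/-- Upper (right) Dini derivative of `V` along the vector field `f` at `x`,
`D⁺V(x) = limsup_{h→0⁺} (V(x + h f(x)) − V(x))/h`. -/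
noncomputable def dini {m : ℕ} (V : (Fin m → ℝ) → ℝ)
    (f : (Fin m → ℝ) → (Fin m → ℝ)) (x : Fin m → ℝ) : ℝ :=
  Filter.limsup (fun h : ℝ => (V (x + h • f x) - V x) / h) (nhdsWithin 0 (Set.Ioi 0))

/-- The rank-one matrix `Γ^ℓ = e_j γ_iᵀ ∈ ℝ^{ν×ν}`. -/
noncomputable def GammaEll {n ν : ℕ} (Γ : Matrix (Fin n) (Fin ν) ℝ) (i : Fin n) (j : Fin ν) :
    Matrix (Fin ν) (Fin ν) ℝ :=
  Matrix.vecMulVec (Pi.single j 1) (fun k => Γ i k)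

/-- Principal minor of `M` with rows and columns indexed by `I`. -/
noncomputable def pminor {m : ℕ} (M : Matrix (Fin m) (Fin m) ℝ) (I : Finset (Fin m)) : ℝ :=
  (M.submatrix (fun i : {x : Fin m // x ∈ I} => (i : Fin m))
    (fun i : {x : Fin m // x ∈ I} => (i : Fin m))).det

noncomputable def gmap {n ν : ℕ} (Γ : Matrix (Fin n) (Fin ν) ℝ) (I : Finset (Fin n)) :
    MultilinearMap ℝ (fun _ : {x : Fin n // x ∈ I} => (Fin ν → ℝ)) ℝ :=
  (Matrix.detRowAlternating : ({x : Fin n // x ∈ I} → ℝ) [⋀^{x : Fin n // x ∈ I}]→ₗ[ℝ] ℝ).toMultilinearMap.compLinearMap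
    (fun _ => ((-Γ).submatrix (fun a : {x : Fin n // x ∈ I} => (a : Fin n)) id).mulVecLin)

lemma pminor_eq_gmap {n ν : ℕ} (Γ : Matrix (Fin n) (Fin ν) ℝ) (ρ : Matrix (Fin ν) (Fin n) ℝ)
    (I : Finset (Fin n)) :
    pminor (-(Γ * ρ)) I = gmap Γ I (fun b => fun j => ρ j (b : Fin n)) := by
  rw [pminor, ← Matrix.det_transpose]
  unfold gmap
  simp only [MultilinearMap.compLinearMap_apply, AlternatingMap.coe_multilinearMap]
  show _ = Matrix.detRowAlternating _
  congr 1
  ext b a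
  simp [Matrix.mulVec, Matrix.mul_apply, dotProduct, neg_mul, Finset.sum_neg_distrib,
    mul_comm]

/-- Admissible (nonnegative) sign pattern. -/
def OkPat {n ν : ℕ} (A : Matrix (Fin n) (Fin ν) ℕ) (ρ : Matrix (Fin ν) (Fin n) ℝ) : Prop :=
  ∀ i j, (0 < A i j → 0 ≤ ρ j i) ∧ (A i j = 0 → ρ j i = 0)

lemma pminor_add_ge {n ν : ℕ} (A : Matrix (Fin n) (Fin ν) ℕ) (Γ : Matrix (Fin n) (Fin ν) ℝ)
    (hP0 : ∀ ρ : Matrix (Fin ν) (Fin n) ℝ, OkPat A ρ →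
      ∀ I : Finset (Fin n), 0 ≤ pminor (-(Γ * ρ)) I)
    (σ τ : Matrix (Fin ν) (Fin n) ℝ) (hσ : OkPat A σ) (hτ : OkPat A τ)
    (I : Finset (Fin n)) :
    pminor (-(Γ * τ)) I ≤ pminor (-(Γ * (σ + τ))) I := by
  classical
  set ι := {x : Fin n // x ∈ I}
  set m : ι → (Fin ν → ℝ) := fun b => fun j => σ j (b : Fin n) with hm
  set m' : ι → (Fin ν → ℝ) := fun b => fun j => τ j (b : Fin n) with hm'
  have hadd : pminor (-(Γ * (σ + τ))) I = ∑ s : Finset ι, gmap Γ I (s.piecewise m m') := by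
    rw [pminor_eq_gmap]
    have : (fun b : ι => fun j => (σ + τ) j (b : Fin n)) = m + m' := by
      funext b j; simp [hm, hm', Matrix.add_apply]
    rw [this, MultilinearMap.map_add_univ]
  -- each term is a principal minor of an admissible pattern
  have hterm : ∀ s : Finset ι,
      gmap Γ I (s.piecewise m m') = pminor (-(Γ * (Matrix.of fun j i =>
        if h : i ∈ I then (if (⟨i, h⟩ : ι) ∈ s then σ j i else τ j i) else τ j i))) I := by
    intro s
    rw [pminor_eq_gmap]
    congr 1
    funext b j
    by_cases hb : b ∈ s <;>
      simp [Finset.piecewise, hb, hm, hm', b.2]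
  have hok : ∀ s : Finset ι, OkPat A (Matrix.of fun j i =>
      if h : i ∈ I then (if (⟨i, h⟩ : ι) ∈ s then σ j i else τ j i) else τ j i) := by
    intro s i j
    simp only [Matrix.of_apply]
    by_cases h : i ∈ I
    · simp only [dif_pos h]
      by_cases hs : (⟨i, h⟩ : ι) ∈ s
      · simp only [if_pos hs]; exact hσ i j
      · simp only [if_neg hs]; exact hτ i j
    · simp only [dif_neg h]; exact hτ i j
  rw [hadd]
  have hempty : gmap Γ I ((∅ : Finset ι).piecewise m m') = pminor (-(Γ * τ)) I := by
    rw [Finset.piecewise_empty, pminor_eq_gmap]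
  calc pminor (-(Γ * τ)) I = gmap Γ I ((∅ : Finset ι).piecewise m m') := hempty.symm
    _ ≤ ∑ s : Finset ι, gmap Γ I (s.piecewise m m') := by
        apply Finset.single_le_sum (f := fun s : Finset ι => gmap Γ I (s.piecewise m m'))
        · intro s _
          rw [hterm s]
          exact hP0 _ (hok s) I
        · exact Finset.mem_univ _

lemma pminor_smul {n ν : ℕ} (Γ : Matrix (Fin n) (Fin ν) ℝ) (ρ : Matrix (Fin ν) (Fin n) ℝ)
    (c : ℝ) (I : Finset (Fin n)) :
    pminor (-(Γ * (c • ρ))) I = c ^ I.card * pminor (-(Γ * ρ)) I := by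
  have h1 : -(Γ * (c • ρ)) = c • (-(Γ * ρ)) := by
    rw [Matrix.mul_smul]; ext i j; simp
  rw [h1, pminor, pminor]
  have h2 : ((c • (-(Γ * ρ))).submatrix (fun i : {x : Fin n // x ∈ I} => (i : Fin n))
      (fun i : {x : Fin n // x ∈ I} => (i : Fin n)))
      = c • ((-(Γ * ρ)).submatrix (fun i : {x : Fin n // x ∈ I} => (i : Fin n))
      (fun i : {x : Fin n // x ∈ I} => (i : Fin n))) := by
    ext a b; simp
  rw [h2, Matrix.det_smul, Fintype.card_coe]

/-- Theorem 5.1 (Robust Nonsingularity): under the P₀ property, positivity of the sum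
of the `k×k` principal minors (`k = rank Γ`) of `−Γρ₀` at one strictly positive
admissible pattern `ρ₀` implies its positivity at every such pattern; in particular at
the Jacobian `−Γ ∂R/∂x(x)` of every admissible kinetics at every point of the open
positive orthant. -/
theorem stmt9 {n ν : ℕ} (A : Matrix (Fin n) (Fin ν) ℕ)
    (Γ : Matrix (Fin n) (Fin ν) ℝ)
    (hP0 : ∀ ρ : Matrix (Fin ν) (Fin n) ℝ,
      (∀ i j, (0 < A i j → 0 ≤ ρ j i) ∧ (A i j = 0 → ρ j i = 0)) →
      ∀ I : Finset (Fin n), 0 ≤ pminor (-(Γ * ρ)) I)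
    (ρ₀ : Matrix (Fin ν) (Fin n) ℝ)
    (hρ₀ : ∀ i j, (0 < A i j → 0 < ρ₀ j i) ∧ (A i j = 0 → ρ₀ j i = 0))
    (hpos : 0 < ∑ I ∈ Finset.univ.filter (fun I : Finset (Fin n) => I.card = Γ.rank),
        pminor (-(Γ * ρ₀)) I) :
    (∀ ρ : Matrix (Fin ν) (Fin n) ℝ,
      (∀ i j, (0 < A i j → 0 < ρ j i) ∧ (A i j = 0 → ρ j i = 0)) →
      0 < ∑ I ∈ Finset.univ.filter (fun I : Finset (Fin n) => I.card = Γ.rank),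
        pminor (-(Γ * ρ)) I)
    ∧ (∀ R, IsAdmissible A R → ∀ x : Fin n → ℝ, (∀ i, 0 < x i) →
      0 < ∑ I ∈ Finset.univ.filter (fun I : Finset (Fin n) => I.card = Γ.rank),
        pminor (-(Γ * Matrix.of fun (j : Fin ν) (i : Fin n) => pd R x j i)) I) := by
    classical
  have hP0' : ∀ ρ : Matrix (Fin ν) (Fin n) ℝ, OkPat A ρ →
      ∀ I : Finset (Fin n), 0 ≤ pminor (-(Γ * ρ)) I := hP0
  have main : ∀ ρ : Matrix (Fin ν) (Fin n) ℝ,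
      (∀ i j, (0 < A i j → 0 < ρ j i) ∧ (A i j = 0 → ρ j i = 0)) →
      0 < ∑ I ∈ Finset.univ.filter (fun I : Finset (Fin n) => I.card = Γ.rank),
        pminor (-(Γ * ρ)) I := by
    intro ρ hρ
    obtain ⟨c, hc, hcle⟩ : ∃ c : ℝ, 0 < c ∧ ∀ i j, 0 < A i j → c * ρ₀ j i ≤ ρ j i := by
      set T := Finset.univ.filter (fun p : Fin n × Fin ν => 0 < A p.1 p.2) with hT
      by_cases h : T.Nonempty
      · refine ⟨T.inf' h (fun p => ρ p.2 p.1 / ρ₀ p.2 p.1), ?_, ?_⟩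
        · rw [Finset.lt_inf'_iff]
          intro p hp
          have hA : 0 < A p.1 p.2 := (Finset.mem_filter.mp hp).2
          exact div_pos ((hρ p.1 p.2).1 hA) ((hρ₀ p.1 p.2).1 hA)
        · intro i j hA
          have hmem : (i, j) ∈ T := by simp [hT, hA]
          have h1 := Finset.inf'_le (fun p : Fin n × Fin ν => ρ p.2 p.1 / ρ₀ p.2 p.1) hmem
          have h2 : 0 < ρ₀ j i := (hρ₀ i j).1 hA
          have := (le_div_iff₀ h2).mp h1
          linarith
      · refine ⟨1, one_pos, fun i j hA => absurd ?_ h⟩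
        exact ⟨(i, j), by simp [hT, hA]⟩
    set τ : Matrix (Fin ν) (Fin n) ℝ := c • ρ₀ with hτdef
    set σ : Matrix (Fin ν) (Fin n) ℝ := ρ - τ with hσdef
    have hστ : σ + τ = ρ := sub_add_cancel ρ τ
    have hτent : ∀ i j, τ j i = c * ρ₀ j i := fun i j => rfl
    have hτok : OkPat A τ := by
      intro i j
      refine ⟨fun hA => ?_, fun hA => ?_⟩
      · rw [hτent]; exact (mul_pos hc ((hρ₀ i j).1 hA)).le
      · rw [hτent, (hρ₀ i j).2 hA, mul_zero]
    have hσok : OkPat A σ := by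
      intro i j
      have hσent : σ j i = ρ j i - c * ρ₀ j i := rfl
      refine ⟨fun hA => ?_, fun hA => ?_⟩
      · rw [hσent]; linarith [hcle i j hA]
      · rw [hσent, (hρ i j).2 hA, (hρ₀ i j).2 hA, mul_zero, sub_zero]
    have key : ∀ I : Finset (Fin n), pminor (-(Γ * τ)) I ≤ pminor (-(Γ * ρ)) I := by
      intro I
      have := pminor_add_ge A Γ hP0' σ τ hσok hτok I
      rwa [hστ] at this
    calc (0:ℝ) < c ^ Γ.rank * ∑ I ∈ Finset.univ.filter
          (fun I : Finset (Fin n) => I.card = Γ.rank), pminor (-(Γ * ρ₀)) I :=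
        mul_pos (pow_pos hc _) hpos
      _ = ∑ I ∈ Finset.univ.filter (fun I : Finset (Fin n) => I.card = Γ.rank),
          pminor (-(Γ * τ)) I := by
        rw [Finset.mul_sum]
        refine Finset.sum_congr rfl fun I hI => ?_
        have hcard : I.card = Γ.rank := (Finset.mem_filter.mp hI).2
        rw [hτdef, pminor_smul, hcard]
      _ ≤ ∑ I ∈ Finset.univ.filter (fun I : Finset (Fin n) => I.card = Γ.rank),
          pminor (-(Γ * ρ)) I := Finset.sum_le_sum fun I _ => key I
  refine ⟨main, fun R hR x hx => main _ fun i j => ?_⟩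
  exact ⟨fun hA => hR.deriv_pos x hx i j hA,
    fun hA => hR.deriv_zero x (fun i => (hx i).le) i j hA⟩
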